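/- For any PP expression e and any pair of variables ?x, ?y, the PP patterns ⟨?x, (e)*, ?y⟩ and ⟨?y, (^e)*, ?x⟩ are semantically equivalent under context-based semantics: their evaluations over any Web of Linked Data W are equal as multisets of solution mappings. -/

import Mathlib

/-- SPARQL property path expressions. -/
inductive PPE : Type where
  | iri : String → PPE
  | neg : List String → PPE
  | inv : PPE → PPE
  | seq : PPE → PPE → PPE
  | alt : PPE → PPE → PPE
  | star : PPE → PPE

/-- Subject/object terms of a property path pattern: IRIs, literals, or variables. -/
inductive Trm : Type where
  | iri : String → Trm
  | lit : String → Trm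
  | var : ℕ → Trm

/-- Graph patterns: property path patterns closed under AND, UNION, OPT. -/
inductive GP : Type where
  | pp : Trm → PPE → Trm → GP
  | and : GP → GP → GP
  | union : GP → GP → GP
  | opt : GP → GP → GP

def Trm.vars : Trm → Set ℕ
  | .var v => {v}
  | _ => ∅

def GP.vars : GP → Set ℕ
  | .pp a _ b => a.vars ∪ b.vars
  | .and P Q => P.vars ∪ Q.vars
  | .union P Q => P.vars ∪ Q.vars
  | .opt P Q => P.vars ∪ Q.vars

def PPE.size : PPE → ℕ
  | .iri _ => 1
  | .neg _ => 1
  | .inv e => 1 + e.size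
  | .seq e f => 1 + e.size + f.size
  | .alt e f => 1 + e.size + f.size
  | .star e => 2 + e.size

def GP.size : GP → ℕ
  | .pp _ e _ => 3 * e.size
  | .and P Q => 1 + P.size + Q.size
  | .union P Q => 1 + P.size + Q.size
  | .opt P Q => 1 + P.size + Q.size

/-- RDF terms: IRIs, blank nodes, literals. -/
inductive RT : Type where
  | iri : String → RT
  | bnode : ℕ → RT
  | lit : String → RT
deriving DecidableEq

/-- RDF triples (subject, predicate IRI, object). -/
abbrev Triple := RT × String × RT

/-- A solution mapping: a partial function from variables to RDF terms. -/
def SolMap := ℕ → Option RT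

/-- The domain of a solution mapping. -/
def domOf (μ : SolMap) : Set ℕ := {v | μ v ≠ none}

/-- Compatibility of solution mappings. -/
def Compat (μ1 μ2 : SolMap) : Prop :=
  ∀ v a b, μ1 v = some a → μ2 v = some b → a = b

/-- Union of solution mappings. -/
def munion (μ1 μ2 : SolMap) : SolMap :=
  fun v => (μ1 v).orElse (fun _ => μ2 v)

/-- The empty solution mapping. -/
def emptyMap : SolMap := fun _ => none

/-- A (finite) Web of Linked Data `W = ⟨D, data, adoc⟩`: a finite set of documents,
each with a finite set of RDF triples, and a partial map from IRIs to documents. -/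
structure WoLD where
  D : Type
  fin : Finite D
  data : D → Finset Triple
  adoc : String → Option D

/-- The context selector `C_W`: an IRI `u` retrieving a document is mapped to the
triples of that document having subject `u`; everything else is mapped to `∅`. -/
def Cw (W : WoLD) : RT → Set Triple
  | .iri u =>
      match W.adoc u with
      | some d => {t | t ∈ W.data d ∧ t.1 = RT.iri u}
      | none => ∅
  | _ => ∅

/-- All RDF terms appearing in some document of `W`. -/
def termsOf (W : WoLD) : Set RT :=
  {t | ∃ d : W.D, ∃ tr ∈ W.data d, t = tr.1 ∨ t = RT.iri tr.2.1 ∨ t = tr.2.2}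

/-- Applying a solution mapping to a subject/object term of a pattern. -/
def appT (μ : SolMap) : Trm → Option RT
  | .iri u => some (.iri u)
  | .lit l => some (.lit l)
  | .var v => μ v

attribute [local instance] Classical.propDecidable

/-- Multiset union of multisets of solution mappings (represented by their
cardinality functions): cardinalities add. -/
noncomputable def unionC (M1 M2 : SolMap → ℕ∞) : SolMap → ℕ∞ :=
  fun μ => M1 μ + M2 μ

/-- The join of two multisets of solution mappings. -/
noncomputable def joinC (M1 M2 : SolMap → ℕ∞) : SolMap → ℕ∞ :=
  fun μ => ∑' p : SolMap × SolMap,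
    if Compat p.1 p.2 ∧ munion p.1 p.2 = μ then M1 p.1 * M2 p.2 else 0

/-- Multiset difference `M1 ∖ M2`: the mappings of `M1` that are incompatible with
every mapping of `M2`, with unchanged cardinalities. -/
noncomputable def diffC (M1 M2 : SolMap → ℕ∞) : SolMap → ℕ∞ :=
  fun μ => if ∀ μ2, M2 μ2 ≠ 0 → ¬ Compat μ μ2 then M1 μ else 0

/-- Restriction of a solution mapping to a set of variables. -/
noncomputable def restrictMap (μ : SolMap) (V : Set ℕ) : SolMap :=
  fun v => if v ∈ V then μ v else none

/-- Projection `π_V` of a multiset of solution mappings. -/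
noncomputable def projC (V : Set ℕ) (M : SolMap → ℕ∞) : SolMap → ℕ∞ :=
  fun μ => ∑' μ' : SolMap, if restrictMap μ' V = μ then M μ' else 0

def Trm.varBound : Trm → ℕ
  | .var v => v + 1
  | _ => 0

/-- A variable not occurring in `a` or `b`. -/
def freshVar (a b : Trm) : ℕ := max a.varBound b.varBound

/-- Context-based semantics `[[·]]_W^ctx` of graph patterns over a Web of Linked Data
(Definition 3 of Hartig & Pirrò), as a multiset of solution mappings represented by its
cardinality function. The auxiliary reachability functions ALPW1/ALPW2 are rendered by
the reflexive-transitive closure of the one-step relation given by evaluating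
`⟨?x, e, ?y⟩`; the star case `⟨?x,(e)*,c⟩` with constant object is reduced (inlined) to
`⟨c,(^e)*,?x⟩`. -/
noncomputable def evalCB (W : WoLD) : GP → SolMap → ℕ∞
  | .pp a (.iri p) b => fun μ =>
      if domOf μ = a.vars ∪ b.vars ∧
         ∃ s o, appT μ a = some s ∧ appT μ b = some o ∧ (s, p, o) ∈ Cw W s
      then 1 else 0
  | .pp a (.neg L) b => fun μ =>
      if domOf μ = a.vars ∪ b.vars ∧
         ∃ s o p, p ∉ L ∧ appT μ a = some s ∧ appT μ b = some o ∧ (s, p, o) ∈ Cw W s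
      then 1 else 0
  | .pp a (.inv e) b => evalCB W (.pp b e a)
  | .pp a (.alt e f) b =>
      unionC (evalCB W (.pp a e b)) (evalCB W (.pp a f b))
  | .pp a (.seq e f) b =>
      projC (a.vars ∪ b.vars)
        (joinC (evalCB W (.pp a e (.var (freshVar a b))))
               (evalCB W (.pp (.var (freshVar a b)) f b)))
  | .pp (.var x) (.star e) (.var y) => fun μ =>
      if domOf μ = {x, y} ∧
         ∃ s t, μ x = some s ∧ μ y = some t ∧ s ∈ termsOf W ∧
           Relation.ReflTransGen
             (fun c c' => ∃ ν : SolMap,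
               evalCB W (.pp (.var 0) e (.var 1)) ν ≠ 0 ∧ ν 0 = some c ∧ ν 1 = some c')
             s t
      then 1 else 0
  | .pp (.var x) (.star e) b => fun μ =>
      -- b is a constant: `⟨?x,(e)*,c⟩` is evaluated as `⟨c,(^e)*,?x⟩`
      if domOf μ = {x} ∧
         ∃ s t, appT μ b = some s ∧ μ x = some t ∧
           Relation.ReflTransGen
             (fun c c' => ∃ ν : SolMap,
               evalCB W (.pp (.var 0) (.inv e) (.var 1)) ν ≠ 0 ∧ ν 0 = some c ∧ ν 1 = some c')
             s t
      then 1 else 0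
  | .pp a (.star e) (.var y) => fun μ =>
      -- a is a constant
      if domOf μ = {y} ∧
         ∃ s t, appT μ a = some s ∧ μ y = some t ∧
           Relation.ReflTransGen
             (fun c c' => ∃ ν : SolMap,
               evalCB W (.pp (.var 0) e (.var 1)) ν ≠ 0 ∧ ν 0 = some c ∧ ν 1 = some c')
             s t
      then 1 else 0
  | .pp a (.star e) b => fun μ =>
      -- a and b are constants
      if domOf μ = (∅ : Set ℕ) ∧
         ∃ s t, appT μ a = some s ∧ appT μ b = some t ∧
           Relation.ReflTransGen
             (fun c c' => ∃ ν : SolMap,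
               evalCB W (.pp (.var 0) e (.var 1)) ν ≠ 0 ∧ ν 0 = some c ∧ ν 1 = some c')
             s t
      then 1 else 0
  | .and P Q => joinC (evalCB W P) (evalCB W Q)
  | .union P Q => unionC (evalCB W P) (evalCB W Q)
  | .opt P Q =>
      unionC (joinC (evalCB W P) (evalCB W Q)) (diffC (evalCB W P) (evalCB W Q))
termination_by P => P.size
decreasing_by all_goals simp only [GP.size, PPE.size]; omega

/-! ### Auxiliary machinery for `star_inv_swap` -/

lemma enat_summable' {ι : Type*} (f : ι → ℕ∞) : Summable f :=
  ⟨_, hasSum_of_isLUB (f := f) _ (isLUB_iSup (f := fun s : Finset ι => ∑ i ∈ s, f i))⟩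

lemma enat_tsum_ne_zero_iff {ι : Type*} (f : ι → ℕ∞) :
    (∑' x, f x) ≠ 0 ↔ ∃ a, f a ≠ 0 := by
  constructor
  · intro h; by_contra hc; push_neg at hc; exact h (by simp [hc])
  · rintro ⟨a, ha⟩ h0
    exact ha (le_antisymm (h0 ▸ Summable.le_tsum (enat_summable' f) a fun _ _ => zero_le ..) (zero_le ..))

lemma enat_ite_one_ne_zero {c : Prop} [Decidable c] :
    (if c then (1 : ℕ∞) else 0) ≠ 0 ↔ c := by
  split_ifs with h <;> simp [h]

lemma enat_ite_ne_zero {c : Prop} [Decidable c] {t : ℕ∞} :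
    (if c then t else 0) ≠ 0 ↔ c ∧ t ≠ 0 := by
  split_ifs with h <;> simp [h]

/-- The abstract semantic relation determined by a PP expression. -/
def Sem (W : WoLD) : PPE → RT → RT → Prop
  | .iri p => fun s o => (s, p, o) ∈ Cw W s
  | .neg L => fun s o => ∃ p, p ∉ L ∧ (s, p, o) ∈ Cw W s
  | .inv e => fun s o => Sem W e o s
  | .seq e f => fun s o => ∃ m, Sem W e s m ∧ Sem W f m o
  | .alt e f => fun s o => Sem W e s o ∨ Sem W f s o
  | .star e => fun s o => s ∈ termsOf W ∧ Relation.ReflTransGen (Sem W e) s o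

lemma cw_mem_terms {W : WoLD} {s : RT} {p : String} {o : RT} (h : (s, p, o) ∈ Cw W s) :
    s ∈ termsOf W ∧ o ∈ termsOf W := by
  cases s with
  | iri u =>
    simp only [Cw] at h
    cases hd : W.adoc u with
    | none => rw [hd] at h; cases h
    | some d =>
      rw [hd] at h
      obtain ⟨hm, -⟩ := h
      exact ⟨⟨d, (RT.iri u, p, o), hm, Or.inl rfl⟩,
             ⟨d, (RT.iri u, p, o), hm, Or.inr (Or.inr rfl)⟩⟩
  | bnode n => cases h
  | lit l => cases h

lemma sem_terms {W : WoLD} : ∀ (e : PPE) (s o : RT),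
    Sem W e s o → s ∈ termsOf W ∧ o ∈ termsOf W := by
  intro e
  induction e with
  | iri p => intro s o h; exact cw_mem_terms h
  | neg L => rintro s o ⟨p, -, h⟩; exact cw_mem_terms h
  | inv e ih => intro s o h; exact (ih o s h).symm
  | seq e f ihe ihf => rintro s o ⟨m, h1, h2⟩; exact ⟨(ihe s m h1).1, (ihf m o h2).2⟩
  | alt e f ihe ihf =>
      rintro s o (h | h)
      · exact ihe s o h
      · exact ihf s o h
  | star e ih =>
      rintro s o ⟨hs, hr⟩
      refine ⟨hs, ?_⟩
      induction hr with
      | refl => exact hs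
      | tail _ hstep iho => exact (ih _ _ hstep).2

lemma rtg_terms {W : WoLD} {e : PPE} {s t : RT} (hs : s ∈ termsOf W)
    (h : Relation.ReflTransGen (Sem W e) s t) : t ∈ termsOf W := by
  induction h with
  | refl => exact hs
  | tail _ hstep ih => exact (sem_terms e _ _ hstep).2

/-- The canonical solution mapping binding `x ↦ s`, `y ↦ o`. -/
def mk2 (x y : ℕ) (s o : RT) : SolMap :=
  fun v => if v = x then some s else if v = y then some o else none

lemma mk2_fst (x y : ℕ) (s o : RT) : mk2 x y s o x = some s := by simp [mk2]

lemma mk2_snd {x y : ℕ} (h : x ≠ y) (s o : RT) : mk2 x y s o y = some o := by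
  simp [mk2, Ne.symm h]

lemma mk2_swap {x y : ℕ} (h : x ≠ y) (s o : RT) : mk2 y x s o = mk2 x y o s := by
  funext v
  simp only [mk2]
  rcases eq_or_ne v x with rfl | hvx
  · simp [h]
  · rcases eq_or_ne v y with rfl | hvy
    · simp [hvx]
    · simp [hvx, hvy]

lemma domOf_mk2 {x y : ℕ} (h : x ≠ y) (s o : RT) :
    domOf (mk2 x y s o) = {x, y} := by
  ext v
  simp only [domOf, mk2, Set.mem_setOf_eq, Set.mem_insert_iff, Set.mem_singleton_iff]
  rcases eq_or_ne v x with rfl | hvx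
  · simp
  · rcases eq_or_ne v y with rfl | hvy
    · simp [hvx]
    · simp [hvx, hvy]

lemma eq_mk2 {x y : ℕ} {ν : SolMap} {s o : RT} (hdom : domOf ν = {x, y})
    (hx : ν x = some s) (hy : ν y = some o) : ν = mk2 x y s o := by
  funext v
  simp only [mk2]
  rcases eq_or_ne v x with rfl | hvx
  · simp [hx]
  · rcases eq_or_ne v y with rfl | hvy
    · simp [hy, hvx]
    · simp only [hvx, hvy, if_false]
      by_contra hne
      have : v ∈ domOf ν := hne
      rw [hdom] at this
      rcases this with h | h
      · exact hvx h
      · exact hvy h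

lemma freshVar_var (x y : ℕ) :
    freshVar (.var x) (.var y) = max (x + 1) (y + 1) := rfl

/-- Characterization of context-based evaluation of `⟨?x, e, ?y⟩` (with `?x ≠ ?y`)
in terms of the abstract semantic relation. -/
lemma eval_char (W : WoLD) (e : PPE) :
    ∀ x y : ℕ, x ≠ y → ∀ ν : SolMap,
      (evalCB W (.pp (.var x) e (.var y)) ν ≠ 0 ↔
        ∃ s o, ν = mk2 x y s o ∧ Sem W e s o) := by
  induction e with
  | iri p =>
    intro x y hxy ν
    rw [evalCB]
    simp only [enat_ite_one_ne_zero]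
    simp only [appT, Trm.vars, Set.singleton_union]
    constructor
    · rintro ⟨hdom, s, o, hx, hy, hm⟩
      exact ⟨s, o, eq_mk2 hdom hx hy, hm⟩
    · rintro ⟨s, o, rfl, hm⟩
      exact ⟨domOf_mk2 hxy s o, s, o, mk2_fst x y s o, mk2_snd hxy s o, hm⟩
  | neg L =>
    intro x y hxy ν
    rw [evalCB]
    simp only [enat_ite_one_ne_zero]
    simp only [appT, Trm.vars, Set.singleton_union]
    constructor
    · rintro ⟨hdom, s, o, p, hp, hx, hy, hm⟩
      exact ⟨s, o, eq_mk2 hdom hx hy, p, hp, hm⟩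
    · rintro ⟨s, o, rfl, p, hp, hm⟩
      exact ⟨domOf_mk2 hxy s o, s, o, p, hp, mk2_fst x y s o, mk2_snd hxy s o, hm⟩
  | inv e ih =>
    intro x y hxy ν
    rw [evalCB]
    rw [ih y x (Ne.symm hxy) ν]
    constructor
    · rintro ⟨s, o, rfl, hm⟩
      exact ⟨o, s, mk2_swap hxy s o, hm⟩
    · rintro ⟨s, o, rfl, hm⟩
      exact ⟨o, s, (mk2_swap hxy o s).symm, hm⟩
  | seq e f ihe ihf =>
    intro x y hxy ν
    rw [evalCB]
    have hzx : x ≠ freshVar (.var x) (.var y) := by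
      rw [freshVar_var]; omega
    have hzy : freshVar (.var x) (.var y) ≠ y := by
      rw [freshVar_var]; omega
    set z := freshVar (.var x) (.var y) with hz
    have hxz : x < z := by rw [hz, freshVar_var]; omega
    have hyz : y < z := by rw [hz, freshVar_var]; omega
    simp only [projC, joinC, enat_tsum_ne_zero_iff,
      enat_ite_ne_zero, mul_ne_zero_iff]
    simp only [Trm.vars, Set.singleton_union]
    constructor
    · rintro ⟨μ', hres, ⟨μ1, μ2⟩, ⟨hcomp, hun⟩, h1, h2⟩
      obtain ⟨s, m, rfl, hsem1⟩ := (ihe x z hzx μ1).mp h1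
      obtain ⟨m', o, rfl, hsem2⟩ := (ihf z y hzy μ2).mp h2
      have hmm : m = m' :=
        hcomp z m m' (mk2_snd hzx s m) (mk2_fst z y m' o)
      subst hmm
      refine ⟨s, o, ?_, m, hsem1, hsem2⟩
      rw [← hres, ← hun]
      funext v
      simp only [restrictMap, munion, mk2, Set.mem_insert_iff, Set.mem_singleton_iff]
      rcases eq_or_ne v x with rfl | hvx
      · simp [hzx, hxy]
      · rcases eq_or_ne v y with rfl | hvy
        · simp [hvx, Ne.symm hzy, Ne.symm hxy]
        · simp [hvx, hvy]
    · rintro ⟨s, o, rfl, m, hsem1, hsem2⟩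
      refine ⟨munion (mk2 x z s m) (mk2 z y m o), ?_, ⟨mk2 x z s m, mk2 z y m o⟩,
        ⟨?_, rfl⟩, (ihe x z hzx _).mpr ⟨s, m, rfl, hsem1⟩,
        (ihf z y hzy _).mpr ⟨m, o, rfl, hsem2⟩⟩
      · funext v
        simp only [restrictMap, munion, mk2, Set.mem_insert_iff, Set.mem_singleton_iff]
        rcases eq_or_ne v x with rfl | hvx
        · simp [hzx, hxy]
        · rcases eq_or_ne v y with rfl | hvy
          · simp [hvx, Ne.symm hzy, Ne.symm hxy]
          · simp [hvx, hvy]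
      · intro v a b h1 h2
        simp only [mk2] at h1 h2
        rcases eq_or_ne v x with rfl | hvx
        · rw [if_neg (by omega), if_neg hxy] at h2; cases h2
        · rcases eq_or_ne v z with rfl | hvz
          · rw [if_neg hvx, if_pos rfl] at h1
            rw [if_pos rfl] at h2
            rw [← Option.some_inj, ← h1, ← h2]
          · rw [if_neg hvx, if_neg hvz] at h1; cases h1
  | alt e f ihe ihf =>
    intro x y hxy ν
    rw [evalCB]
    simp only [unionC]
    rw [show ∀ a b : ℕ∞, a + b ≠ 0 ↔ a ≠ 0 ∨ b ≠ 0 by intro a b; simp [add_eq_zero]; tauto]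
    rw [ihe x y hxy ν, ihf x y hxy ν]
    constructor
    · rintro (⟨s, o, rfl, hm⟩ | ⟨s, o, rfl, hm⟩)
      · exact ⟨s, o, rfl, Or.inl hm⟩
      · exact ⟨s, o, rfl, Or.inr hm⟩
    · rintro ⟨s, o, rfl, hm | hm⟩
      · exact Or.inl ⟨s, o, rfl, hm⟩
      · exact Or.inr ⟨s, o, rfl, hm⟩
  | star e ih =>
    intro x y hxy ν
    rw [evalCB]
    have hrel : (fun c c' => ∃ ν' : SolMap,
        evalCB W (.pp (.var 0) e (.var 1)) ν' ≠ 0 ∧ ν' 0 = some c ∧ ν' 1 = some c')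
        = Sem W e := by
      funext c c'
      refine propext ⟨?_, ?_⟩
      · rintro ⟨ν', hne, h0, h1⟩
        obtain ⟨s, o, rfl, hsem⟩ := (ih 0 1 (by omega) ν').mp hne
        rw [mk2_fst] at h0
        rw [mk2_snd (by omega)] at h1
        obtain rfl : s = c := by injection h0
        obtain rfl : o = c' := by injection h1
        exact hsem
      · intro hsem
        exact ⟨mk2 0 1 c c', (ih 0 1 (by omega) _).mpr ⟨c, c', rfl, hsem⟩,
          mk2_fst 0 1 c c', mk2_snd (by omega) c c'⟩
    rw [hrel, enat_ite_one_ne_zero]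
    constructor
    · rintro ⟨hdom, s, t, hx, hy, hterms, hr⟩
      exact ⟨s, t, eq_mk2 hdom hx hy, hterms, hr⟩
    · rintro ⟨s, t, rfl, hterms, hr⟩
      exact ⟨domOf_mk2 hxy s t, s, t, mk2_fst x y s t, mk2_snd hxy s t, hterms, hr⟩

/-- The PP patterns `⟨?x, (e)*, ?y⟩` and `⟨?y, (^e)*, ?x⟩` are semantically equivalent
under context-based semantics over any Web of Linked Data. -/
theorem star_inv_swap (e : PPE) (x y : ℕ) (W : WoLD) :
    evalCB W (.pp (.var x) (.star e) (.var y)) =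
      evalCB W (.pp (.var y) (.star (.inv e)) (.var x)) := by
  funext mu
  rw [evalCB, evalCB]
  have hrel : ∀ f : PPE, (fun c c' => ∃ ν' : SolMap,
      evalCB W (.pp (.var 0) f (.var 1)) ν' ≠ 0 ∧ ν' 0 = some c ∧ ν' 1 = some c')
      = Sem W f := by
    intro f
    funext c c'
    refine propext ⟨?_, ?_⟩
    · rintro ⟨ν', hne, h0, h1⟩
      obtain ⟨s, o, rfl, hsem⟩ := (eval_char W f 0 1 (by omega) ν').mp hne
      rw [mk2_fst] at h0
      rw [mk2_snd (by omega)] at h1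
      obtain rfl : s = c := by injection h0
      obtain rfl : o = c' := by injection h1
      exact hsem
    · intro hsem
      exact ⟨mk2 0 1 c c', (eval_char W f 0 1 (by omega) _).mpr ⟨c, c', rfl, hsem⟩,
        mk2_fst 0 1 c c', mk2_snd (by omega) c c'⟩
  rw [hrel e, hrel (.inv e)]
  have hswap : Sem W (.inv e) = Function.swap (Sem W e) := rfl
  beta_reduce
  refine if_congr (Iff.intro ?_ ?_) rfl rfl
  · rintro ⟨hdom, s, t, hx, hy, hterms, hr⟩
    refine ⟨by rw [hdom, Set.pair_comm], t, s, hy, hx, rtg_terms hterms hr, ?_⟩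
    rw [hswap, Relation.reflTransGen_swap]
    exact hr
  · rintro ⟨hdom, s, t, hy, hx, hterms, hr⟩
    rw [hswap, Relation.reflTransGen_swap] at hr
    refine ⟨by rw [hdom, Set.pair_comm], t, s, hx, hy, ?_, hr⟩
    have : t ∈ termsOf W := rtg_terms (e := .inv e) hterms (by
      rw [hswap, Relation.reflTransGen_swap]; exact hr)
    exact this
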